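/- Let M and K be positive natural numbers, let R and R̂₁, …, R̂_K be M×M complex positive semidefinite matrices such that R − Σₖ R̂ₖ is positive semidefinite, let h₁, …, h_K ∈ ℂᴹ with hₖᴴR̂ₖhₖ ≠ 0 for each k, let Γ > 0 and σ₁², …, σ_K² be reals, and suppose (1 + Γ⁻¹)·hₖᴴR̂ₖhₖ ≥ hₖᴴRhₖ + σₖ² for each k. Define R̃ₖ = (1/(hₖᴴR̂ₖhₖ)) · (R̂ₖhₖ)(R̂ₖhₖ)ᴴ. Then: (i) each R̃ₖ is positive semidefinite with rank 1; (ii) R − Σₖ R̃ₖ is positive semidefinite; and (iii) (1 + Γ⁻¹)·hₖᴴR̃ₖhₖ ≥ hₖᴴRhₖ + σₖ² for each k. Hence (R, R̃₁, …, R̃_K) is feasible for the rank-one-constrained problem and attains the same objective value as (R, R̂₁, …, R̂_K) for any objective depending only on R. -/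

import Mathlib

open Matrix ComplexOrder



namespace SdrAux

variable {M : ℕ}

/-- hermitian swap -/
lemma herm_swap {A : Matrix (Fin M) (Fin M) ℂ} (hA : A.IsHermitian)
    (x y : Fin M → ℂ) :
    star y ⬝ᵥ A *ᵥ x = star (star x ⬝ᵥ A *ᵥ y) := by
  rw [star_dotProduct, star_mulVec, ← dotProduct_mulVec, hA.eq]

lemma vecMulVec_mulVec (u v x : Fin M → ℂ) :
    vecMulVec u v *ᵥ x = (v ⬝ᵥ x) • u := by
  ext i
  simp [mulVec, vecMulVec_apply, dotProduct, Finset.mul_sum, mul_comm, mul_assoc, mul_left_comm]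

lemma quad (c : ℂ) (u x : Fin M → ℂ) :
    star x ⬝ᵥ (c • vecMulVec u (star u)) *ᵥ x
      = c * (star (star x ⬝ᵥ u) * (star x ⬝ᵥ u)) := by
  rw [smul_mulVec, vecMulVec_mulVec, dotProduct_smul, smul_eq_mul, dotProduct_smul,
    star_dotProduct]
  simp [smul_eq_mul, mul_assoc]


lemma smul_vecMulVec_isHermitian {a : ℝ} (u : Fin M → ℂ) :
    (((a : ℂ)) • vecMulVec u (star u)).IsHermitian := by
  ext i j
  simp [Matrix.conjTranspose_apply, vecMulVec_apply, Complex.conj_ofReal, mul_comm]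

lemma smul_vecMulVec_posSemidef {a : ℝ} (ha : 0 ≤ a) (u : Fin M → ℂ) :
    (((a : ℂ)) • vecMulVec u (star u)).PosSemidef := by
  refine Matrix.PosSemidef.of_dotProduct_mulVec_nonneg (smul_vecMulVec_isHermitian u) fun x => ?_
  rw [quad]
  exact mul_nonneg (Complex.zero_le_real.mpr ha) (star_mul_self_nonneg _)

lemma rank_helper {u : Fin M → ℂ} (hu : u ≠ 0) {c : ℂ} (hc : c ≠ 0) :
    (c • vecMulVec u (star u)).rank = 1 := by
  obtain ⟨j, hj⟩ : ∃ j, u j ≠ 0 := Function.ne_iff.mp hu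
  have hcol : ∀ j, (c • vecMulVec u (star u))ᵀ j = (c * star (u j)) • u := by
    intro j; ext i
    simp [Matrix.transpose_apply, vecMulVec_apply, mul_comm, mul_left_comm]
  have hspan : Submodule.span ℂ (Set.range (c • vecMulVec u (star u))ᵀ)
      = Submodule.span ℂ {u} := by
    apply le_antisymm
    · rw [Submodule.span_le]
      rintro - ⟨j', rfl⟩
      rw [hcol]
      exact Submodule.smul_mem _ _ (Submodule.subset_span rfl)
    · rw [Submodule.span_le, Set.singleton_subset_iff]
      have hk : (c * star (u j)) ≠ 0 := mul_ne_zero hc (star_ne_zero.mpr hj)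
      have hmem : ((c * star (u j)) • u)
          ∈ Submodule.span ℂ (Set.range (c • vecMulVec u (star u))ᵀ) := by
        rw [← hcol]; exact Submodule.subset_span ⟨j, rfl⟩
      have h2 := Submodule.smul_mem _ ((c * star (u j))⁻¹) hmem
      rwa [smul_smul, inv_mul_cancel₀ hk, one_smul] at h2
  rw [Matrix.rank_eq_finrank_span_cols, show Set.range (c • vecMulVec u (star u)).col
      = Set.range (c • vecMulVec u (star u))ᵀ from rfl, hspan]
  exact finrank_span_singleton hu


lemma sub_psd {A : Matrix (Fin M) (Fin M) ℂ} (hA : A.PosSemidef) (h : Fin M → ℂ)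
    (hc : star h ⬝ᵥ A *ᵥ h ≠ 0) :
    (A - (star h ⬝ᵥ A *ᵥ h)⁻¹ •
        vecMulVec (A *ᵥ h) (star (A *ᵥ h))).PosSemidef := by
  have hc0 : 0 ≤ star h ⬝ᵥ A *ᵥ h := hA.dotProduct_mulVec_nonneg h
  have hcim : (star h ⬝ᵥ A *ᵥ h).im = 0 := (Complex.nonneg_iff.mp hc0).2.symm
  have hcre : star h ⬝ᵥ A *ᵥ h = (((star h ⬝ᵥ A *ᵥ h).re : ℝ) : ℂ) :=
    Complex.ext rfl (by simp [hcim])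
  have hinv : (star h ⬝ᵥ A *ᵥ h)⁻¹ = ((((star h ⬝ᵥ A *ᵥ h).re)⁻¹ : ℝ) : ℂ) := by
    rw [Complex.ofReal_inv, ← hcre]
  have hinvnn : 0 ≤ (star h ⬝ᵥ A *ᵥ h)⁻¹ := by
    rw [hinv]
    exact Complex.zero_le_real.mpr (inv_nonneg.mpr (Complex.nonneg_iff.mp hc0).1)
  apply Matrix.PosSemidef.of_dotProduct_mulVec_nonneg
  · refine hA.1.sub ?_
    rw [hinv]
    exact smul_vecMulVec_isHermitian _
  · intro x
    have hstarc : star (star h ⬝ᵥ A *ᵥ h) = star h ⬝ᵥ A *ᵥ h := by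
      rw [hcre]; exact Complex.conj_ofReal _
    have h1 : star h ⬝ᵥ A *ᵥ x = star (star x ⬝ᵥ A *ᵥ h) := herm_swap hA.1 x h
    have key := hA.dotProduct_mulVec_nonneg ((star h ⬝ᵥ A *ᵥ h) • x - star (star x ⬝ᵥ A *ᵥ h) • h)
    have hexp : star ((star h ⬝ᵥ A *ᵥ h) • x - star (star x ⬝ᵥ A *ᵥ h) • h) ⬝ᵥ
          A *ᵥ ((star h ⬝ᵥ A *ᵥ h) • x - star (star x ⬝ᵥ A *ᵥ h) • h)
        = (star h ⬝ᵥ A *ᵥ h) * ((star h ⬝ᵥ A *ᵥ h) * (star x ⬝ᵥ A *ᵥ x)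
            - star (star x ⬝ᵥ A *ᵥ h) * (star x ⬝ᵥ A *ᵥ h)) := by
      simp only [Matrix.mulVec_sub, Matrix.mulVec_smul, star_sub, star_smul, star_star,
        sub_dotProduct, dotProduct_sub, smul_dotProduct, dotProduct_smul, smul_eq_mul,
        h1, hstarc]
      ring
    rw [hexp] at key
    have hfin : star x ⬝ᵥ A *ᵥ x - (star h ⬝ᵥ A *ᵥ h)⁻¹ *
          (star (star x ⬝ᵥ A *ᵥ h) * (star x ⬝ᵥ A *ᵥ h))
        = ((star h ⬝ᵥ A *ᵥ h)⁻¹ * (star h ⬝ᵥ A *ᵥ h)⁻¹) *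
            ((star h ⬝ᵥ A *ᵥ h) * ((star h ⬝ᵥ A *ᵥ h) * (star x ⬝ᵥ A *ᵥ x)
              - star (star x ⬝ᵥ A *ᵥ h) * (star x ⬝ᵥ A *ᵥ h))) := by
      field_simp
    rw [Matrix.sub_mulVec, dotProduct_sub, quad, hfin]
    exact mul_nonneg (mul_nonneg hinvnn hinvnn) key


lemma quad_re_nonneg {A : Matrix (Fin M) (Fin M) ℂ} (hA : A.PosSemidef) (h : Fin M → ℂ) :
    0 ≤ (star h ⬝ᵥ A *ᵥ h).re :=
  (Complex.nonneg_iff.mp (hA.dotProduct_mulVec_nonneg h)).1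

lemma quad_eq_re {A : Matrix (Fin M) (Fin M) ℂ} (hA : A.PosSemidef) (h : Fin M → ℂ) :
    star h ⬝ᵥ A *ᵥ h = (((star h ⬝ᵥ A *ᵥ h).re : ℝ) : ℂ) :=
  Complex.ext rfl (by simp [(Complex.nonneg_iff.mp (hA.dotProduct_mulVec_nonneg h)).2.symm])

lemma quad_inv_eq_re {A : Matrix (Fin M) (Fin M) ℂ} (hA : A.PosSemidef) (h : Fin M → ℂ) :
    (star h ⬝ᵥ A *ᵥ h)⁻¹ = ((((star h ⬝ᵥ A *ᵥ h).re)⁻¹ : ℝ) : ℂ) := by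
  rw [Complex.ofReal_inv, ← quad_eq_re hA h]

end SdrAux

open SdrAux in
theorem sdr_tightness_main (M K : ℕ)
    (R : Matrix (Fin M) (Fin M) ℂ) (Rhat : Fin K → Matrix (Fin M) (Fin M) ℂ)
    (hR : R.PosSemidef) (hRhat : ∀ k, (Rhat k).PosSemidef)
    (hdiff : (R - ∑ k, Rhat k).PosSemidef)
    (h : Fin K → (Fin M → ℂ))
    (hne : ∀ k, star (h k) ⬝ᵥ (Rhat k) *ᵥ (h k) ≠ 0)
    (Γ : ℝ) (σsq : Fin K → ℝ)
    (hsinr : ∀ k, (star (h k) ⬝ᵥ R *ᵥ (h k)).re + σsq k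
        ≤ (1 + Γ⁻¹) * (star (h k) ⬝ᵥ (Rhat k) *ᵥ (h k)).re) :
    let Rtil : Fin K → Matrix (Fin M) (Fin M) ℂ := fun k =>
      (star (h k) ⬝ᵥ (Rhat k) *ᵥ (h k))⁻¹ •
        Matrix.vecMulVec ((Rhat k) *ᵥ (h k)) (star ((Rhat k) *ᵥ (h k)))
    (∀ k, (Rtil k).PosSemidef ∧ (Rtil k).rank = 1) ∧
    (R - ∑ k, Rtil k).PosSemidef ∧
    (∀ k, (star (h k) ⬝ᵥ R *ᵥ (h k)).re + σsq k
        ≤ (1 + Γ⁻¹) * (star (h k) ⬝ᵥ (Rtil k) *ᵥ (h k)).re) := by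
  intro Rtil
  have hRtil : ∀ k, Rtil k = (star (h k) ⬝ᵥ (Rhat k) *ᵥ (h k))⁻¹ •
      Matrix.vecMulVec ((Rhat k) *ᵥ (h k)) (star ((Rhat k) *ᵥ (h k))) := fun _ => rfl
  have hu : ∀ k, (Rhat k) *ᵥ (h k) ≠ 0 := by
    intro k h0
    exact hne k (by rw [h0, dotProduct_zero])
  have hval : ∀ k, star (h k) ⬝ᵥ (Rtil k) *ᵥ (h k) = star (h k) ⬝ᵥ (Rhat k) *ᵥ (h k) := by
    intro k
    rw [hRtil k, quad]
    rw [show star (star (h k) ⬝ᵥ (Rhat k) *ᵥ (h k)) = star (h k) ⬝ᵥ (Rhat k) *ᵥ (h k) by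
      rw [quad_eq_re (hRhat k) (h k)]; exact Complex.conj_ofReal _]
    field_simp
  refine ⟨fun k => ⟨?_, ?_⟩, ?_, fun k => ?_⟩
  · rw [hRtil k, quad_inv_eq_re (hRhat k) (h k)]
    exact smul_vecMulVec_posSemidef (inv_nonneg.mpr (quad_re_nonneg (hRhat k) (h k))) _
  · rw [hRtil k]
    exact rank_helper (hu k) (inv_ne_zero (hne k))
  · have hsub : ∀ k, ((Rhat k) - Rtil k).PosSemidef := by
      intro k
      rw [hRtil k]
      exact sub_psd (hRhat k) (h k) (hne k)
    have heq : R - ∑ k, Rtil k = (R - ∑ k, Rhat k) + ∑ k, (Rhat k - Rtil k) := by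
      rw [Finset.sum_sub_distrib]
      abel
    rw [heq]
    exact hdiff.add (Finset.sum_induction _ _ (fun a b ha hb => ha.add hb)
      Matrix.PosSemidef.zero (fun k _ => hsub k))
  · rw [hval k]
    exact hsinr k

/-- Lemma 2 of the paper (tightness of the semidefinite relaxation): given an
optimal solution `(R, R̂₁, …, R̂_K)` of the relaxed problem, the rank-one
surrogates `R̃ₖ = (hₖᴴR̂ₖhₖ)⁻¹ (R̂ₖhₖ)(R̂ₖhₖ)ᴴ` are positive semidefinite of
rank one, keep `R − Σₖ R̃ₖ` positive semidefinite, and still satisfy the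
per-user SINR constraints; hence `(R, R̃₁, …, R̃_K)` is feasible for the
rank-one-constrained problem with the same value of any objective that depends
only on `R`. -/
theorem sdr_tightness (M K : ℕ) (hM : 0 < M) (hK : 0 < K)
    (R : Matrix (Fin M) (Fin M) ℂ) (Rhat : Fin K → Matrix (Fin M) (Fin M) ℂ)
    (hR : R.PosSemidef) (hRhat : ∀ k, (Rhat k).PosSemidef)
    (hdiff : (R - ∑ k, Rhat k).PosSemidef)
    (h : Fin K → (Fin M → ℂ))
    (hne : ∀ k, star (h k) ⬝ᵥ (Rhat k) *ᵥ (h k) ≠ 0)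
    (Γ : ℝ) (hΓ : 0 < Γ) (σsq : Fin K → ℝ)
    (hsinr : ∀ k, (star (h k) ⬝ᵥ R *ᵥ (h k)).re + σsq k
        ≤ (1 + Γ⁻¹) * (star (h k) ⬝ᵥ (Rhat k) *ᵥ (h k)).re) :
    let Rtil : Fin K → Matrix (Fin M) (Fin M) ℂ := fun k =>
      (star (h k) ⬝ᵥ (Rhat k) *ᵥ (h k))⁻¹ •
        Matrix.vecMulVec ((Rhat k) *ᵥ (h k)) (star ((Rhat k) *ᵥ (h k)))
    (∀ k, (Rtil k).PosSemidef ∧ (Rtil k).rank = 1) ∧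
    (R - ∑ k, Rtil k).PosSemidef ∧
    (∀ k, (star (h k) ⬝ᵥ R *ᵥ (h k)).re + σsq k
        ≤ (1 + Γ⁻¹) * (star (h k) ⬝ᵥ (Rtil k) *ᵥ (h k)).re) := by
  exact sdr_tightness_main M K R Rhat hR hRhat hdiff h hne Γ σsq hsinr
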